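/- Let β ∈ (0,1) be irrational with minus continued fraction digits (n_k). Then for every k ≥ 1 and every 1 ≤ j ≤ ℓ_k(0), the j-th letter of the word b_k(0) equals ψ_j^{(β)}, where ψ_n^{(β)} := 1 if the fractional part {(n−1)β} lies in [1−β, 1) and ψ_n^{(β)} := 0 otherwise. -/

import Mathlib

/-- `β_k`: the orbit of `β` under the minus (modified) continued fraction algorithm,
`β_0 = β`, `β_{k+1} = ⌈1/β_k⌉ − 1/β_k`. -/
noncomputable def betaSeq (β : ℝ) : ℕ → ℝ
  | 0 => β
  | k+1 => (⌈1 / betaSeq β k⌉ : ℝ) - 1 / betaSeq β k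

/-- The minus continued fraction digits: `nDigit β k = n_{k+1} = ⌈1/β_k⌉`. -/
noncomputable def nDigit (β : ℝ) (k : ℕ) : ℤ := ⌈1 / betaSeq β k⌉

/-- Block lengths `(ℓ_k(0), ℓ_k(1))`. -/
noncomputable def ell (β : ℝ) : ℕ → ℕ × ℕ
  | 0 => (1, 1)
  | k+1 => ((nDigit β k - 1).toNat * (ell β k).1 + (ell β k).2,
            (nDigit β k - 2).toNat * (ell β k).1 + (ell β k).2)

/-- The substitution words `(b_k(0), b_k(1))` over `{0,1}`. -/
noncomputable def bword (β : ℝ) : ℕ → List ℕ × List ℕ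
  | 0 => ([0], [1])
  | k+1 =>
      ((List.replicate (nDigit β k - 1).toNat (bword β k).1).flatten ++ (bword β k).2,
       (List.replicate (nDigit β k - 2).toNat (bword β k).1).flatten ++ (bword β k).2)

namespace BwordAux

/-- `eps β k = ε_{k-1} = β·β_1⋯β_{k-1}` (so `eps β 0 = 1`, `eps β 1 = β`). -/
noncomputable def eps (β : ℝ) : ℕ → ℝ
  | 0 => 1
  | k+1 => eps β k * betaSeq β k

/-- Integer companions: `(ell β k).i * β = (pp β k).i + (small error)`. -/
noncomputable def pp (β : ℝ) : ℕ → ℤ × ℤ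
  | 0 => (0, 1)
  | k+1 => ((nDigit β k - 1) * (pp β k).1 + (pp β k).2,
            (nDigit β k - 2) * (pp β k).1 + (pp β k).2)

/-- The rotation coding letter at (0-indexed) position `i` with intercept `x`. -/
noncomputable def letter (β x : ℝ) (i : ℕ) : ℕ :=
  if ⌊x + ((i : ℝ) + 1) * β⌋ = ⌊x + (i : ℝ) * β⌋ then 0 else 1

variable {β : ℝ}

lemma betaSeq_prop (h0 : 0 < β) (h1 : β < 1) (hirr : Irrational β) :
    ∀ k, Irrational (betaSeq β k) ∧ 0 < betaSeq β k ∧ betaSeq β k < 1 := by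
  intro k
  induction k with
  | zero => exact ⟨hirr, h0, h1⟩
  | succ k ih =>
    obtain ⟨hi, hp, hl⟩ := ih
    have hinv : Irrational (1 / betaSeq β k) := by simpa [one_div] using hi.inv
    have hne : (1 : ℝ) / betaSeq β k ≠ (⌈1 / betaSeq β k⌉ : ℝ) := hinv.ne_int _
    have hle : (1 : ℝ) / betaSeq β k ≤ (⌈1 / betaSeq β k⌉ : ℝ) := Int.le_ceil _
    have hlt1 : (⌈1 / betaSeq β k⌉ : ℝ) < 1 / betaSeq β k + 1 := Int.ceil_lt_add_one _
    refine ⟨?_, ?_, ?_⟩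
    · show Irrational ((⌈1 / betaSeq β k⌉ : ℝ) - 1 / betaSeq β k)
      exact hinv.intCast_sub _
    · show 0 < (⌈1 / betaSeq β k⌉ : ℝ) - 1 / betaSeq β k
      cases lt_or_eq_of_le hle with
      | inl h => linarith
      | inr h => exact absurd h hne
    · show (⌈1 / betaSeq β k⌉ : ℝ) - 1 / betaSeq β k < 1
      linarith

lemma nDigit_ge (h0 : 0 < β) (h1 : β < 1) (hirr : Irrational β) (k : ℕ) :
    2 ≤ nDigit β k := by
  obtain ⟨_, hp, hl⟩ := betaSeq_prop h0 h1 hirr k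
  have : (1 : ℝ) < 1 / betaSeq β k := (one_lt_div hp).mpr hl
  have : (1 : ℤ) < ⌈1 / betaSeq β k⌉ := Int.lt_ceil.mpr (by exact_mod_cast this)
  unfold nDigit; omega

lemma eps_pos (h0 : 0 < β) (h1 : β < 1) (hirr : Irrational β) (k : ℕ) :
    0 < eps β k := by
  induction k with
  | zero => norm_num [eps]
  | succ k ih => exact mul_pos ih (betaSeq_prop h0 h1 hirr k).2.1

lemma eps_succ_lt (h0 : 0 < β) (h1 : β < 1) (hirr : Irrational β) (k : ℕ) :
    eps β (k+1) < eps β k := by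
  have h := (betaSeq_prop h0 h1 hirr k).2.2
  have := eps_pos h0 h1 hirr k
  calc eps β (k+1) = eps β k * betaSeq β k := rfl
    _ < eps β k * 1 := by
        exact mul_lt_mul_of_pos_left h this
    _ = eps β k := mul_one _

lemma eps_rec (h0 : 0 < β) (h1 : β < 1) (hirr : Irrational β) (k : ℕ) :
    eps β (k+2) = (nDigit β k : ℝ) * eps β (k+1) - eps β k := by
  have hb : betaSeq β k ≠ 0 := ne_of_gt (betaSeq_prop h0 h1 hirr k).2.1
  show eps β (k+1) * betaSeq β (k+1) = _
  have h1' : betaSeq β (k+1) = (nDigit β k : ℝ) - 1 / betaSeq β k := rfl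
  have h2' : eps β (k+1) = eps β k * betaSeq β k := rfl
  rw [h1', h2']
  field_simp

lemma cast_toNat_one (h0 : 0 < β) (h1 : β < 1) (hirr : Irrational β) (k : ℕ) :
    (((nDigit β k - 1).toNat : ℕ) : ℝ) = (nDigit β k : ℝ) - 1 := by
  have h2 := nDigit_ge h0 h1 hirr k
  have : ((nDigit β k - 1).toNat : ℤ) = nDigit β k - 1 := Int.toNat_of_nonneg (by omega)
  rw [show (((nDigit β k - 1).toNat : ℕ) : ℝ) = (((nDigit β k - 1).toNat : ℤ) : ℝ) by
    push_cast; ring, this]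
  push_cast; ring

lemma cast_toNat_two (h0 : 0 < β) (h1 : β < 1) (hirr : Irrational β) (k : ℕ) :
    (((nDigit β k - 2).toNat : ℕ) : ℝ) = (nDigit β k : ℝ) - 2 := by
  have h2 := nDigit_ge h0 h1 hirr k
  have : ((nDigit β k - 2).toNat : ℤ) = nDigit β k - 2 := Int.toNat_of_nonneg (by omega)
  rw [show (((nDigit β k - 2).toNat : ℕ) : ℝ) = (((nDigit β k - 2).toNat : ℤ) : ℝ) by
    push_cast; ring, this]
  push_cast; ring

lemma ell_mul (h0 : 0 < β) (h1 : β < 1) (hirr : Irrational β) :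
    ∀ k, ((ell β k).1 : ℝ) * β = ((pp β k).1 : ℝ) + eps β (k+1) ∧
         ((ell β k).2 : ℝ) * β = ((pp β k).2 : ℝ) + (eps β (k+1) - eps β k) := by
  intro k
  induction k with
  | zero =>
    constructor
    · norm_num [ell, pp, eps, betaSeq]
    · norm_num [ell, pp, eps, betaSeq]
  | succ k ih =>
    obtain ⟨ihq, ihr⟩ := ih
    have hrec := eps_rec h0 h1 hirr k
    have c1 := cast_toNat_one h0 h1 hirr k
    have c2 := cast_toNat_two h0 h1 hirr k
    constructor
    · show ((((nDigit β k - 1).toNat * (ell β k).1 + (ell β k).2 : ℕ)) : ℝ) * β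
        = (((nDigit β k - 1) * (pp β k).1 + (pp β k).2 : ℤ) : ℝ) + eps β (k+2)
      push_cast [c1]
      linear_combination ((nDigit β k : ℝ) - 1) * ihq + ihr - hrec
    · show ((((nDigit β k - 2).toNat * (ell β k).1 + (ell β k).2 : ℕ)) : ℝ) * β
        = (((nDigit β k - 2) * (pp β k).1 + (pp β k).2 : ℤ) : ℝ) + (eps β (k+2) - eps β (k+1))
      push_cast [c2]
      linear_combination ((nDigit β k : ℝ) - 2) * ihq + ihr - hrec

lemma bword_len (β : ℝ) : ∀ k, (bword β k).1.length = (ell β k).1 ∧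
    (bword β k).2.length = (ell β k).2 := by
  intro k
  induction k with
  | zero => simp [bword, ell]
  | succ k ih =>
    constructor <;>
      simp [bword, ell, List.length_flatten, List.map_replicate, List.sum_replicate,
        smul_eq_mul, ih.1, ih.2]

lemma ell_pos (β : ℝ) : ∀ k, 0 < (ell β k).1 ∧ 0 < (ell β k).2 := by
  intro k
  induction k with
  | zero => simp [ell]
  | succ k ih => simp [ell]; omega

lemma letter_shift (x E : ℝ) (q j m : ℕ) (p : ℤ) (hq : (q : ℝ) * β = (p : ℝ) + E) :
    letter β x (q * m + j) = letter β (x + (m : ℝ) * E) j := by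
  unfold letter
  have e1 : x + (((q * m + j : ℕ) : ℝ) + 1) * β
      = (x + (m : ℝ) * E + ((j : ℝ) + 1) * β) + ((m * p : ℤ) : ℝ) := by
    push_cast
    linear_combination (m : ℝ) * hq
  have e2 : x + ((q * m + j : ℕ) : ℝ) * β
      = (x + (m : ℝ) * E + (j : ℝ) * β) + ((m * p : ℤ) : ℝ) := by
    push_cast
    linear_combination (m : ℝ) * hq
  rw [e1, e2, Int.floor_add_intCast, Int.floor_add_intCast]
  simp

lemma getD_flat (w : List ℕ) : ∀ (m i : ℕ), i < m * w.length →
    (List.replicate m w).flatten.getD i 0 = w.getD (i % w.length) 0 := by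
  intro m
  induction m with
  | zero => intro i h; simp at h
  | succ m ih =>
    intro i h
    rw [List.replicate_succ, List.flatten_cons]
    by_cases hi : i < w.length
    · rw [List.getD_append _ _ _ _ hi, Nat.mod_eq_of_lt hi]
    · push_neg at hi
      rw [List.getD_append_right _ _ _ _ hi, Nat.mod_eq_sub_mod hi]
      refine ih (i - w.length) ?_
      rw [Nat.succ_mul] at h
      omega

set_option maxHeartbeats 1000000 in
lemma main (h0 : 0 < β) (h1 : β < 1) (hirr : Irrational β) :
    ∀ k,
    (∀ x : ℝ, 0 ≤ x → x < eps β k - eps β (k+1) → ∀ i, i < (ell β k).1 →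
      (bword β k).1.getD i 0 = letter β x i) ∧
    (∀ x : ℝ, eps β k - eps β (k+1) ≤ x → x < eps β k → ∀ i, i < (ell β k).2 →
      (bword β k).2.getD i 0 = letter β x i) := by
  intro k
  induction k with
  | zero =>
    have he0 : eps β 0 = 1 := rfl
    have he1 : eps β 1 = β := by simp [eps, betaSeq]
    constructor
    · intro x hx0 hx1 i hi
      rw [he0, he1] at hx1
      have hi0 : i = 0 := by simpa [ell] using hi
      subst hi0
      have f2 : ⌊x + (0 : ℝ) * β⌋ = 0 := by
        rw [zero_mul, add_zero]
        exact Int.floor_eq_zero_iff.mpr ⟨hx0, by linarith⟩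
      have f1 : ⌊x + ((0 : ℝ) + 1) * β⌋ = 0 := by
        rw [zero_add, one_mul]
        exact Int.floor_eq_zero_iff.mpr ⟨by linarith, by linarith⟩
      simp only [bword, letter, Nat.cast_zero, List.getD]
      rw [f1, f2]
      simp
    · intro x hx0 hx1 i hi
      rw [he0, he1] at hx0
      rw [he0] at hx1
      have hi0 : i = 0 := by simpa [ell] using hi
      subst hi0
      have f2 : ⌊x + (0 : ℝ) * β⌋ = 0 := by
        rw [zero_mul, add_zero]
        exact Int.floor_eq_zero_iff.mpr ⟨by linarith, hx1⟩
      have f1 : ⌊x + ((0 : ℝ) + 1) * β⌋ = 1 := by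
        rw [zero_add, one_mul]
        have : x + β ∈ Set.Ico (1 : ℝ) 2 := ⟨by linarith, by linarith⟩
        rw [show (1 : ℝ) = ((1 : ℤ) : ℝ) by norm_num] at this
        rw [show (2 : ℝ) = ((1 : ℤ) : ℝ) + 1 by norm_num] at this
        exact Int.floor_eq_iff.mpr ⟨this.1, this.2⟩
      simp only [bword, letter, Nat.cast_zero, List.getD]
      rw [f1, f2]
      simp
  | succ k ih =>
    obtain ⟨C, D⟩ := ih
    set n := nDigit β k with hn
    set E := eps β k with hE
    set E' := eps β (k+1) with hE'
    set E'' := eps β (k+2) with hE''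
    set q := (ell β k).1 with hq
    set r := (ell β k).2 with hr
    have hrec : E'' = (n : ℝ) * E' - E := eps_rec h0 h1 hirr k
    have hEpos : 0 < E := eps_pos h0 h1 hirr k
    have hE'pos : 0 < E' := eps_pos h0 h1 hirr (k+1)
    have hE''pos : 0 < E'' := eps_pos h0 h1 hirr (k+2)
    have hE'E : E' < E := eps_succ_lt h0 h1 hirr k
    have hE''E' : E'' < E' := eps_succ_lt h0 h1 hirr (k+1)
    have hqmul : (q : ℝ) * β = ((pp β k).1 : ℝ) + E' := (ell_mul h0 h1 hirr k).1
    have hqpos : 0 < q := (ell_pos β k).1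
    have hw0len : (bword β k).1.length = q := (bword_len β k).1
    have c1 := cast_toNat_one h0 h1 hirr k
    have c2 := cast_toNat_two h0 h1 hirr k
    have hflatlen1 : (List.replicate (n - 1).toNat (bword β k).1).flatten.length
        = (n - 1).toNat * q := by
      simp [List.length_flatten, List.map_replicate, List.sum_replicate, smul_eq_mul, hw0len]
    have hflatlen2 : (List.replicate (n - 2).toNat (bword β k).1).flatten.length
        = (n - 2).toNat * q := by
      simp [List.length_flatten, List.map_replicate, List.sum_replicate, smul_eq_mul, hw0len]
    constructor
    · -- the word b_{k+1}(0)
      intro x hx0 hx1 i hi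
      set M := (n - 1).toNat with hM
      have hMcast : ((M : ℕ) : ℝ) = (n : ℝ) - 1 := c1
      have hi' : i < M * q + r := hi
      show ((List.replicate M (bword β k).1).flatten ++ (bword β k).2).getD i 0 = letter β x i
      by_cases hcase : i < M * q
      · -- inside one of the M copies of b_k(0)
        rw [List.getD_append _ _ _ _ (by rw [hflatlen1]; exact hcase)]
        rw [getD_flat _ _ _ (by rwa [hw0len])]
        set m := i / q with hm
        set jj := i % q with hjj
        have hjq : jj < q := Nat.mod_lt _ hqpos
        have hieq : q * m + jj = i := Nat.div_add_mod i q
        have hmM : m + 1 ≤ M := Nat.div_lt_of_lt_mul (by rwa [Nat.mul_comm] at hcase)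
        have hmMR : (m : ℝ) + 1 ≤ (M : ℝ) := by exact_mod_cast hmM
        have hx'0 : 0 ≤ x + (m : ℝ) * E' := by positivity
        have hx'1 : x + (m : ℝ) * E' < E - E' := by
          have h1' : (m : ℝ) * E' ≤ ((M : ℝ) - 1) * E' :=
            mul_le_mul_of_nonneg_right (by linarith) (le_of_lt hE'pos)
          rw [hMcast] at h1'
          nlinarith
        have := C (x + (m : ℝ) * E') hx'0 hx'1 jj hjq
        rw [hw0len, ← hjj, this, ← hieq]
        exact (letter_shift x E' q jj m _ hqmul).symm
      · -- inside the final copy of b_k(1)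
        push_neg at hcase
        rw [List.getD_append_right _ _ _ _ (by rwa [hflatlen1])]
        rw [hflatlen1]
        set jj := i - M * q with hjj
        have hjr : jj < r := by omega
        have hieq : q * M + jj = i := by rw [Nat.mul_comm q M]; omega
        have hx'0 : E - E' ≤ x + (M : ℝ) * E' := by
          rw [hMcast]; nlinarith
        have hx'1 : x + (M : ℝ) * E' < E := by
          rw [hMcast]; nlinarith
        have := D (x + (M : ℝ) * E') hx'0 hx'1 jj hjr
        rw [this, ← hieq]
        exact (letter_shift x E' q jj M _ hqmul).symm
    · -- the word b_{k+1}(1)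
      intro x hx0 hx1 i hi
      set M := (n - 2).toNat with hM
      have hMcast : ((M : ℕ) : ℝ) = (n : ℝ) - 2 := c2
      have hi' : i < M * q + r := hi
      show ((List.replicate M (bword β k).1).flatten ++ (bword β k).2).getD i 0 = letter β x i
      have hx0' : 0 ≤ x := by nlinarith
      by_cases hcase : i < M * q
      · rw [List.getD_append _ _ _ _ (by rw [hflatlen2]; exact hcase)]
        rw [getD_flat _ _ _ (by rwa [hw0len])]
        set m := i / q with hm
        set jj := i % q with hjj
        have hjq : jj < q := Nat.mod_lt _ hqpos
        have hieq : q * m + jj = i := Nat.div_add_mod i q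
        have hmM : m + 1 ≤ M := Nat.div_lt_of_lt_mul (by rwa [Nat.mul_comm] at hcase)
        have hmMR : (m : ℝ) + 1 ≤ (M : ℝ) := by exact_mod_cast hmM
        have hx'0 : 0 ≤ x + (m : ℝ) * E' := by positivity
        have hx'1 : x + (m : ℝ) * E' < E - E' := by
          have h1' : (m : ℝ) * E' ≤ ((M : ℝ) - 1) * E' :=
            mul_le_mul_of_nonneg_right (by linarith) (le_of_lt hE'pos)
          rw [hMcast] at h1'
          nlinarith
        have := C (x + (m : ℝ) * E') hx'0 hx'1 jj hjq
        rw [hw0len, ← hjj, this, ← hieq]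
        exact (letter_shift x E' q jj m _ hqmul).symm
      · push_neg at hcase
        rw [List.getD_append_right _ _ _ _ (by rwa [hflatlen2])]
        rw [hflatlen2]
        set jj := i - M * q with hjj
        have hjr : jj < r := by omega
        have hieq : q * M + jj = i := by rw [Nat.mul_comm q M]; omega
        have hx'0 : E - E' ≤ x + (M : ℝ) * E' := by
          rw [hMcast]; nlinarith
        have hx'1 : x + (M : ℝ) * E' < E := by
          rw [hMcast]; nlinarith
        have := D (x + (M : ℝ) * E') hx'0 hx'1 jj hjr
        rw [this, ← hieq]
        exact (letter_shift x E' q jj M _ hqmul).symm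

end BwordAux

theorem bword_letters_eq_psi
    (β : ℝ) (h0 : 0 < β) (h1 : β < 1) (hirr : Irrational β)
    (k : ℕ) (hk : 1 ≤ k) (j : ℕ) (hj1 : 1 ≤ j) (hj2 : j ≤ (ell β k).1) :
    (bword β k).1.getD (j - 1) 0 =
      (if Int.fract (((j : ℝ) - 1) * β) ∈ Set.Ico (1 - β) 1 then 1 else 0) := by
  have hlt : (0 : ℝ) < BwordAux.eps β k - BwordAux.eps β (k+1) := by
    have := BwordAux.eps_succ_lt h0 h1 hirr k; linarith
  have h := (BwordAux.main h0 h1 hirr k).1 0 le_rfl hlt (j - 1) (by omega)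
  rw [h]
  unfold BwordAux.letter
  have hjc : (((j - 1 : ℕ) : ℝ)) = (j : ℝ) - 1 := by
    have : ((j : ℝ)) = (((j - 1 : ℕ) : ℝ)) + 1 := by
      rw [show j = (j - 1) + 1 by omega]; push_cast; ring
    linarith
  rw [hjc, zero_add, zero_add]
  set z := ((j : ℝ) - 1) * β with hz
  have hj' : ((j : ℝ) - 1 + 1) * β = z + β := by rw [hz]; ring
  rw [hj']
  have hfr : Int.fract z = z - (⌊z⌋ : ℝ) := Int.self_sub_floor z ▸ rfl
  have hflo : ⌊z⌋ ≤ ⌊z + β⌋ := Int.floor_le_floor (by linarith)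
  have hub : ⌊z + β⌋ ≤ ⌊z⌋ + 1 := by
    have h1' : z < (⌊z⌋ : ℝ) + 1 := Int.lt_floor_add_one z
    have h2' : ⌊z + β⌋ < ⌊z⌋ + 1 + 1 := Int.floor_lt.mpr (by push_cast; linarith)
    omega
  by_cases hB : 1 - β ≤ Int.fract z
  · have hfl : (⌊z⌋ : ℝ) + 1 ≤ z + β := by rw [hfr] at hB; linarith
    have hge : ⌊z⌋ + 1 ≤ ⌊z + β⌋ := Int.le_floor.mpr (by push_cast; linarith)
    have hne : ¬ (⌊z + β⌋ = ⌊z⌋) := by omega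
    rw [if_neg hne, if_pos ⟨hB, Int.fract_lt_one z⟩]
  · have hlt' : Int.fract z < 1 - β := lt_of_not_ge hB
    have hfl : z + β < (⌊z⌋ : ℝ) + 1 := by rw [hfr] at hlt'; linarith
    have hlt2 : ⌊z + β⌋ < ⌊z⌋ + 1 := Int.floor_lt.mpr (by push_cast; linarith)
    have heq : ⌊z + β⌋ = ⌊z⌋ := by omega
    rw [if_pos heq, if_neg (by intro hmem; exact hB hmem.1)]
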